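/- Let n ≥ 2 and let ≿ be a complete and transitive binary relation on [0,1]^n satisfying: (i) u ≿ v whenever u ≥ v; (ii) u ≻ v whenever u ≫ v; (iii) ≿ is symmetric; (iv) ≿ is compromising; and (v) ≿ is continuous, i.e., for every u ∈ [0,1]^n the sets {v ∈ [0,1]^n : v ≿ u} and {v ∈ [0,1]^n : u ≿ v} are closed. Then for all u, v ∈ [0,1]^n: u ≿ v if and only if min_{1 ≤ i ≤ n} u_i ≥ min_{1 ≤ i ≤ n} v_i. -/

import Mathlib

open Finset Filter

namespace Stmt11Aux

lemma fin_add_one_ne {k : ℕ} (i : Fin (k+2)) : i + 1 ≠ i := by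
  intro h
  have h1 := Fin.ext_iff.1 h
  rw [Fin.val_add_one] at h1
  split at h1
  · rename_i he; subst he; simp at h1
  · omega

lemma cast_add_one {k : ℕ} (t : Fin (k+1)) : (t.castSucc : Fin (k+2)) + 1 = t.succ := by
  ext; rw [Fin.val_add_one]; split
  · rename_i he; have := Fin.ext_iff.1 he; simp at this; omega
  · simp

lemma min_exists {α : Type*} [Finite α] [Nonempty α] (f : α → ℝ) (hf : ∀ i, 0 < f i) :
    ∃ m : ℝ, 0 < m ∧ ∀ i, m ≤ f i := by
  obtain ⟨i0, hi0⟩ := Finite.exists_min f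
  exact ⟨f i0, hf i0, hi0⟩

lemma exists_perturb {k : ℕ} (u : Fin (k+2) → ℝ) (δ : ℝ) (hδ : 0 < δ) :
    ∃ η : ℝ, 0 < η ∧ η < δ ∧ Function.Injective (fun i : Fin (k+2) => u i + η * ((i:ℝ)+1)) := by
  have hF : (Set.range (fun p : Fin (k+2) × Fin (k+2) => (u p.2 - u p.1) / ((p.1 : ℝ) - p.2))).Finite :=
    Set.finite_range _
  obtain ⟨η, hη⟩ := ((Set.Ioo_infinite hδ).diff hF).nonempty
  refine ⟨η, hη.1.1, hη.1.2, ?_⟩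
  intro i j hij
  by_contra hne
  have hvne : ((i:ℝ)) ≠ (j:ℝ) := by
    exact_mod_cast fun h => hne (Fin.ext (by exact_mod_cast h))
  have : η * ((i:ℝ) - j) = u j - u i := by simp only at hij; ring_nf; ring_nf at hij; linarith
  have : η = (u j - u i) / ((i:ℝ) - j) := by
    field_simp [sub_ne_zero.2 hvne]; linarith
  exact hη.2 ⟨(i, j), this.symm⟩

/-- Perturbation of `u`: injective, strictly above `u`, within `ε`, order-refining, below 1. -/
lemma exists_good_perturb {k : ℕ} (u : Fin (k+2) → ℝ) (hu1 : ∀ i, u i < 1)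
    (ε : ℝ) (hε : 0 < ε) :
    ∃ u' : Fin (k+2) → ℝ, Function.Injective u' ∧ (∀ i, u i < u' i) ∧
      (∀ i, u' i ≤ u i + ε) ∧ (∀ a b, u a < u b → u' a < u' b) ∧ (∀ i, u' i < 1) := by
  -- minimal positive gap (or ε if u is constant): bound perturbation scale
  obtain ⟨g0, hg0pos, hg0le⟩ : ∃ g0 : ℝ, 0 < g0 ∧
      ∀ a b : Fin (k+2), u a < u b → g0 ≤ u b - u a := by
    by_cases hne : ∃ p : Fin (k+2) × Fin (k+2), u p.1 < u p.2
    · have hN : Nonempty {p : Fin (k+2) × Fin (k+2) // u p.1 < u p.2} :=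
        ⟨⟨hne.choose, hne.choose_spec⟩⟩
      obtain ⟨m, hm, hmle⟩ := min_exists
        (fun p : {p : Fin (k+2) × Fin (k+2) // u p.1 < u p.2} => u p.1.2 - u p.1.1)
        (fun p => by exact sub_pos.2 p.2)
      exact ⟨m, hm, fun a b hab => hmle ⟨(a, b), hab⟩⟩
    · exact ⟨1, one_pos, fun a b hab => absurd ⟨(a, b), hab⟩ hne⟩
  obtain ⟨h1, hh1pos, hh1le⟩ : ∃ h1 : ℝ, 0 < h1 ∧ ∀ i : Fin (k+2), h1 ≤ 1 - u i :=
    min_exists _ (fun i => by linarith [hu1 i])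
  set c : ℝ := min ε (min g0 h1) with hc
  have hcpos : 0 < c := lt_min hε (lt_min hg0pos hh1pos)
  have hcε : c ≤ ε := min_le_left _ _
  have hcg : c ≤ g0 := le_trans (min_le_right _ _) (min_le_left _ _)
  have hch : c ≤ h1 := le_trans (min_le_right _ _) (min_le_right _ _)
  set K : ℝ := (k : ℝ) + 2 with hK
  have hKpos : (0:ℝ) < K := by positivity
  obtain ⟨η, hηpos, hηlt, hinj⟩ := exists_perturb u (c / (2 * K)) (by positivity)
  have hηK : η * K < c / 2 := by
    have h' : η < (c/2)/K := by rw [div_div]; exact hηlt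
    calc η * K < ((c/2)/K) * K := by exact mul_lt_mul_of_pos_right h' hKpos
    _ = c/2 := div_mul_cancel₀ _ hKpos.ne'
  have hcoord : ∀ i : Fin (k+2), (0:ℝ) < (i:ℝ)+1 ∧ (i:ℝ)+1 ≤ K := by
    intro i
    have h2 : (i : ℕ) ≤ k+1 := Nat.lt_succ_iff.1 i.isLt
    have h3 : ((i:ℕ):ℝ) ≤ (k:ℝ)+1 := by exact_mod_cast h2
    exact ⟨by positivity, by rw [hK]; linarith⟩
  refine ⟨fun i => u i + η * ((i:ℝ)+1), hinj, ?_, ?_, ?_, ?_⟩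
  · intro i; show u i < u i + η * ((i:ℝ)+1); nlinarith [(hcoord i).1]
  · intro i
    show u i + η * ((i:ℝ)+1) ≤ u i + ε
    have h2 := (hcoord i).2
    have h1' := (hcoord i).1
    nlinarith
  · intro a b hab
    show u a + η * ((a:ℝ)+1) < u b + η * ((b:ℝ)+1)
    have hga := hg0le a b hab
    have h2a := (hcoord a).2; have h1a := (hcoord a).1
    have h2b := (hcoord b).2; have h1b := (hcoord b).1
    nlinarith
  · intro i
    show u i + η * ((i:ℝ)+1) < 1
    have h2 := (hcoord i).2
    have h1' := (hcoord i).1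
    have := hh1le i
    nlinarith


variable {k : ℕ} {R : (Fin (k+2) → ℝ) → (Fin (k+2) → ℝ) → Prop}

lemma mem_cube {u : Fin (k+2) → ℝ} (h0 : ∀ i, 0 ≤ u i) (h1 : ∀ i, u i ≤ 1) :
    u ∈ Set.Icc (0 : Fin (k+2) → ℝ) 1 := ⟨fun i => h0 i, fun i => h1 i⟩

lemma step
    (htrans : ∀ u v w : Fin (k+2) → ℝ, u ∈ Set.Icc (0 : Fin (k+2) → ℝ) 1 →
      v ∈ Set.Icc (0 : Fin (k+2) → ℝ) 1 → w ∈ Set.Icc (0 : Fin (k+2) → ℝ) 1 →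
      R u v → R v w → R u w)
    (hpareto : ∀ u v : Fin (k+2) → ℝ, u ∈ Set.Icc (0 : Fin (k+2) → ℝ) 1 →
      v ∈ Set.Icc (0 : Fin (k+2) → ℝ) 1 → (∀ i, v i ≤ u i) → R u v)
    (hsymm : ∀ u : Fin (k+2) → ℝ, u ∈ Set.Icc (0 : Fin (k+2) → ℝ) 1 →
      ∀ π : Equiv.Perm (Fin (k+2)), R u (u ∘ π) ∧ R (u ∘ π) u)
    (hcompro : ∀ u v w : Fin (k+2) → ℝ, u ∈ Set.Icc (0 : Fin (k+2) → ℝ) 1 →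
      v ∈ Set.Icc (0 : Fin (k+2) → ℝ) 1 → w ∈ Set.Icc (0 : Fin (k+2) → ℝ) 1 →
      (∀ i, u i ≠ v i) →
      (∀ i, min (u i) (v i) < w i ∧ w i < max (u i) (v i)) →
      R w u ∨ R w v)
    (m0 δ : ℝ) (u : Fin (k+2) → ℝ) (hm00 : 0 ≤ m0) (hm0 : ∀ i, m0 ≤ u i)
    (hu1 : ∀ i, u i < 1) (hδ : 0 < δ) :
    ∃ w j, R w u ∧ (∀ i, m0 ≤ w i) ∧ (∀ i, w i < 1) ∧ (∀ i, w i ≤ u i + δ) ∧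
      (∀ i, u i ≤ u j) ∧ (∀ i, w j ≤ u i + δ) := by
  classical
  have hu0 : ∀ i, 0 ≤ u i := fun i => le_trans hm00 (hm0 i)
  have cu : u ∈ Set.Icc (0 : Fin (k+2) → ℝ) 1 := mem_cube hu0 (fun i => (hu1 i).le)
  obtain ⟨u', hinj, hult, huble, horder, hu'1⟩ :=
    exists_good_perturb u hu1 (δ/2) (by linarith)
  have hu'0 : ∀ i, 0 ≤ u' i := fun i => le_trans (hu0 i) (hult i).le
  set σ := Tuple.sort u' with hσ
  have hsmono : StrictMono (fun t => u' (σ t)) :=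
    (Tuple.monotone_sort u').strictMono_of_injective (hinj.comp (Equiv.injective σ))
  set top : Fin (k+2) := Fin.last (k+1) with htop
  set j := σ top with hj
  have hjmax' : ∀ i, u' i ≤ u' j := by
    intro i
    have h' : u' i = u' (σ (σ.symm i)) := by simp
    rw [h', hj]
    exact hsmono.monotone (Fin.le_last _)
  have hjmax : ∀ i, u i ≤ u j := by
    intro i
    by_contra h
    exact absurd (hjmax' i) (not_le.2 (horder _ _ (not_le.1 h)))
  have hs0min : ∀ i, u' (σ 0) ≤ u' i := by
    intro i
    have h' : u' i = u' (σ (σ.symm i)) := by simp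
    rw [h']
    exact hsmono.monotone (Fin.zero_le _)
  obtain ⟨gmin, hgminpos, hgminle⟩ : ∃ g : ℝ, 0 < g ∧
      ∀ t : Fin (k+1), g ≤ u' (σ t.succ) - u' (σ t.castSucc) :=
    min_exists _ (fun t => sub_pos.2 (hsmono (Fin.castSucc_lt_succ : t.castSucc < t.succ)))
  have hgap : ∀ t : Fin (k+2), t ≠ top → gmin ≤ u' (σ (t+1)) - u' (σ t) := by
    intro t ht
    obtain ⟨t', rfl⟩ : ∃ t' : Fin (k+1), t = t'.castSucc :=
      ⟨t.castPred ht, (Fin.castSucc_castPred t ht).symm⟩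
    rw [cast_add_one]
    exact hgminle t'
  have h0netop : (0 : Fin (k+2)) ≠ top := by
    rw [htop]; intro h; have := Fin.ext_iff.1 h; simp at this
  have htot : gmin ≤ u' j - u' (σ 0) := by
    have h1' := hgap 0 h0netop
    have h2' : u' (σ (0+1)) ≤ u' j := hjmax' _
    linarith
  set η₂ : ℝ := min (gmin/2) (δ/4) with hη₂
  have hη₂pos : 0 < η₂ := lt_min (by linarith) (by linarith)
  have hη₂g : η₂ < gmin := lt_of_le_of_lt (min_le_left _ _) (by linarith)
  have hη₂δ : η₂ ≤ δ/4 := min_le_right _ _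
  set w : Fin (k+2) → ℝ := fun i => if i = j then u' (σ 0) + η₂ else u' i + η₂ with hw
  set π : Equiv.Perm (Fin (k+2)) := σ.symm.trans ((finRotate (k+2)).trans σ) with hπ
  have hπap : ∀ t : Fin (k+2), π (σ t) = σ (t+1) := by
    intro t; rw [hπ]; simp [finRotate_succ_apply]
  have hπne : ∀ i, π i ≠ i := by
    intro i h
    have h2 : π (σ (σ.symm i)) = σ (σ.symm i) := by simpa using h
    rw [hπap] at h2
    exact fin_add_one_ne _ (σ.injective h2)
  have hlast1 : top + 1 = (0 : Fin (k+2)) := by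
    rw [htop]; exact Fin.last_add_one _
  have hne' : ∀ i, u' i ≠ (u' ∘ π) i := fun i h => hπne i (hinj h.symm)
  -- compromise bounds
  have hcb : ∀ i, min (u' i) ((u' ∘ π) i) < w i ∧ w i < max (u' i) ((u' ∘ π) i) := by
    intro i
    obtain ⟨t, rfl⟩ : ∃ t, i = σ t := ⟨σ.symm i, by simp⟩
    have hπt : (u' ∘ π) (σ t) = u' (σ (t+1)) := by rw [Function.comp_apply, hπap]
    rw [hπt]
    by_cases ht : t = top
    · subst ht
      rw [hlast1]
      have hs0top : u' (σ 0) < u' (σ top) := by rw [hj] at htot; linarith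
      have hwj' : w (σ top) = u' (σ 0) + η₂ := by rw [hw]; exact if_pos hj.symm
      rw [hwj', min_eq_right hs0top.le, max_eq_left hs0top.le]
      rw [hj] at htot
      exact ⟨by linarith, by linarith⟩
    · have hij : σ t ≠ j := fun h => ht (σ.injective (h.trans hj.symm ▸ rfl))
      have hlt : u' (σ t) < u' (σ (t+1)) := by linarith [hgap t ht]
      have hwt : w (σ t) = u' (σ t) + η₂ := by rw [hw]; exact if_neg hij
      rw [hwt, min_eq_left hlt.le, max_eq_right hlt.le]
      exact ⟨by linarith, by linarith [hgap t ht]⟩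
  -- w bounds
  have hwif : ∀ i, (i = j → w i = u' (σ 0) + η₂) ∧ (i ≠ j → w i = u' i + η₂) := by
    intro i
    constructor
    · intro h; rw [hw]; exact if_pos h
    · intro h; rw [hw]; exact if_neg h
  have hwm0 : ∀ i, m0 ≤ w i := by
    intro i
    by_cases hij : i = j
    · rw [(hwif i).1 hij]
      exact le_trans (hm0 (σ 0)) (le_of_lt (by linarith [hult (σ 0)]))
    · rw [(hwif i).2 hij]
      exact le_trans (hm0 i) (le_of_lt (by linarith [hult i]))
  have hw1 : ∀ i, w i < 1 := by
    intro i
    by_cases hij : i = j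
    · rw [(hwif i).1 hij]
      have := hu'1 j
      rw [hj] at htot
      linarith
    · rw [(hwif i).2 hij]
      obtain ⟨t, rfl⟩ : ∃ t, i = σ t := ⟨σ.symm i, by simp⟩
      have ht : t ≠ top := fun h => hij (by rw [h, hj])
      have := hgap t ht
      have h2 : u' (σ (t+1)) ≤ u' j := hjmax' _
      have := hu'1 j
      linarith
  have hwle : ∀ i, w i ≤ u i + δ := by
    intro i
    by_cases hij : i = j
    · rw [(hwif i).1 hij]
      have h1' := huble (σ 0)
      have h2' : u (σ 0) ≤ u i := hij ▸ hjmax (σ 0)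
      linarith
    · rw [(hwif i).2 hij]
      have := huble i
      linarith
  have hwj : ∀ i, w j ≤ u i + δ := by
    intro i
    have hjj : w j = u' (σ 0) + η₂ := (hwif j).1 rfl
    rw [hjj]
    have h1' := hs0min i
    have h2' := huble i
    linarith
  -- memberships
  have cu' : u' ∈ Set.Icc (0 : Fin (k+2) → ℝ) 1 := mem_cube hu'0 (fun i => (hu'1 i).le)
  have cuπ : (u' ∘ π) ∈ Set.Icc (0 : Fin (k+2) → ℝ) 1 :=
    mem_cube (fun i => hu'0 _) (fun i => (hu'1 _).le)
  have cw : w ∈ Set.Icc (0 : Fin (k+2) → ℝ) 1 :=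
    mem_cube (fun i => le_trans hm00 (hwm0 i)) (fun i => (hw1 i).le)
  -- relation
  have hco := hcompro u' (u' ∘ π) w cu' cuπ cw hne' hcb
  have hπu' : R (u' ∘ π) u' := (hsymm u' cu' π).2
  have hwu' : R w u' := by
    rcases hco with h | h
    · exact h
    · exact htrans w (u' ∘ π) u' cw cuπ cu' h hπu'
  have hu'u : R u' u := hpareto u' u cu' cu (fun i => (hult i).le)
  exact ⟨w, j, htrans w u' u cw cu' cu hwu' hu'u, hwm0, hw1, hwle, hjmax, hwj⟩


lemma main
    (hcomplete : ∀ u v : Fin (k+2) → ℝ, u ∈ Set.Icc (0 : Fin (k+2) → ℝ) 1 →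
      v ∈ Set.Icc (0 : Fin (k+2) → ℝ) 1 → R u v ∨ R v u)
    (htrans : ∀ u v w : Fin (k+2) → ℝ, u ∈ Set.Icc (0 : Fin (k+2) → ℝ) 1 →
      v ∈ Set.Icc (0 : Fin (k+2) → ℝ) 1 → w ∈ Set.Icc (0 : Fin (k+2) → ℝ) 1 →
      R u v → R v w → R u w)
    (hpareto : ∀ u v : Fin (k+2) → ℝ, u ∈ Set.Icc (0 : Fin (k+2) → ℝ) 1 →
      v ∈ Set.Icc (0 : Fin (k+2) → ℝ) 1 → (∀ i, v i ≤ u i) → R u v)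
    (hsymm : ∀ u : Fin (k+2) → ℝ, u ∈ Set.Icc (0 : Fin (k+2) → ℝ) 1 →
      ∀ π : Equiv.Perm (Fin (k+2)), R u (u ∘ π) ∧ R (u ∘ π) u)
    (hcompro : ∀ u v w : Fin (k+2) → ℝ, u ∈ Set.Icc (0 : Fin (k+2) → ℝ) 1 →
      v ∈ Set.Icc (0 : Fin (k+2) → ℝ) 1 → w ∈ Set.Icc (0 : Fin (k+2) → ℝ) 1 →
      (∀ i, u i ≠ v i) →
      (∀ i, min (u i) (v i) < w i ∧ w i < max (u i) (v i)) →
      R w u ∨ R w v) :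
    ∀ N : ℕ, ∀ u : Fin (k+2) → ℝ, ∀ m0 ε : ℝ, 0 ≤ m0 → 0 < ε →
      (∀ i, m0 ≤ u i) → (∀ i, u i < 1) → (∃ i, u i < m0 + ε) →
      (Finset.univ.filter (fun i => m0 + ε ≤ u i)).card ≤ N →
      ∃ w, R w u ∧ (∀ i, m0 ≤ w i) ∧ (∀ i, w i < 1) ∧ (∀ i, w i < m0 + ε) := by
  classical
  intro N
  induction N with
  | zero =>
    intro u m0 ε hm00 hε hm0 hu1 _hex hcard
    have cu : u ∈ Set.Icc (0 : Fin (k+2) → ℝ) 1 :=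
      mem_cube (fun i => le_trans hm00 (hm0 i)) (fun i => (hu1 i).le)
    have hall : ∀ i, u i < m0 + ε := by
      intro i
      by_contra h
      have hmem : i ∈ Finset.univ.filter (fun i => m0 + ε ≤ u i) :=
        mem_filter.2 ⟨mem_univ i, not_lt.1 h⟩
      have := Finset.card_pos.2 ⟨i, hmem⟩
      omega
    exact ⟨u, (hcomplete u u cu cu).elim id id, hm0, hu1, hall⟩
  | succ N ih =>
    intro u m0 ε hm00 hε hm0 hu1 hex hcard
    have cu : u ∈ Set.Icc (0 : Fin (k+2) → ℝ) 1 :=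
      mem_cube (fun i => le_trans hm00 (hm0 i)) (fun i => (hu1 i).le)
    by_cases h0 : ∀ i, u i < m0 + ε
    · exact ⟨u, (hcomplete u u cu cu).elim id id, hm0, hu1, h0⟩
    · push_neg at h0
      obtain ⟨i1, hi1⟩ := h0
      obtain ⟨i2, hi2⟩ := hex
      have hN2 : Nonempty {i : Fin (k+2) // u i < m0 + ε} := ⟨⟨i2, hi2⟩⟩
      obtain ⟨δ0, hδ0pos, hδ0le⟩ :=
        min_exists (fun i : {i : Fin (k+2) // u i < m0 + ε} => m0 + ε - u i.1)
          (fun i => by exact sub_pos.2 i.2)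
      obtain ⟨w, j, hwu, hwm0, hw1, hwle, hjmax, hwj⟩ :=
        step htrans hpareto hsymm hcompro m0 (δ0/2) u hm00 hm0 hu1 (by linarith)
      have hwlt : ∀ i, u i < m0 + ε → w i < m0 + ε := by
        intro i hi
        have h1' := hwle i
        have h2' := hδ0le ⟨i, hi⟩
        simp only at h2'
        linarith
      have hwjlt : w j < m0 + ε := by
        have h1' := hwj i2
        have h2' := hδ0le ⟨i2, hi2⟩
        simp only at h2'
        linarith
      have hjmem : m0 + ε ≤ u j := le_trans hi1 (hjmax i1)
      have hsub : Finset.univ.filter (fun i => m0 + ε ≤ w i) ⊆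
          (Finset.univ.filter (fun i => m0 + ε ≤ u i)).erase j := by
        intro i hi
        rw [Finset.mem_erase]
        have hwi := (mem_filter.1 hi).2
        constructor
        · rintro rfl; exact absurd hwi (not_le.2 hwjlt)
        · refine mem_filter.2 ⟨mem_univ i, ?_⟩
          by_contra h
          exact absurd hwi (not_le.2 (hwlt i (not_le.1 h)))
      have hcard' : (Finset.univ.filter (fun i => m0 + ε ≤ w i)).card ≤ N := by
        have h1' := Finset.card_le_card hsub
        have h2' : j ∈ Finset.univ.filter (fun i => m0 + ε ≤ u i) :=
          mem_filter.2 ⟨mem_univ j, hjmem⟩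
        have h3' := Finset.card_erase_of_mem h2'
        have h4' := Finset.card_pos.2 ⟨j, h2'⟩
        omega
      obtain ⟨w2, hw2w, hw2m0, hw21, hw2lt⟩ := ih w m0 ε hm00 hε hwm0 hw1 ⟨j, hwjlt⟩ hcard'
      have cw : w ∈ Set.Icc (0 : Fin (k+2) → ℝ) 1 :=
        mem_cube (fun i => le_trans hm00 (hwm0 i)) (fun i => (hw1 i).le)
      have cw2 : w2 ∈ Set.Icc (0 : Fin (k+2) → ℝ) 1 :=
        mem_cube (fun i => le_trans hm00 (hw2m0 i)) (fun i => (hw21 i).le)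
      exact ⟨w2, htrans w2 w u cw2 cw cu hw2w hwu, hw2m0, hw21, hw2lt⟩


lemma constA
    (hcomplete : ∀ u v : Fin (k+2) → ℝ, u ∈ Set.Icc (0 : Fin (k+2) → ℝ) 1 →
      v ∈ Set.Icc (0 : Fin (k+2) → ℝ) 1 → R u v ∨ R v u)
    (htrans : ∀ u v w : Fin (k+2) → ℝ, u ∈ Set.Icc (0 : Fin (k+2) → ℝ) 1 →
      v ∈ Set.Icc (0 : Fin (k+2) → ℝ) 1 → w ∈ Set.Icc (0 : Fin (k+2) → ℝ) 1 →
      R u v → R v w → R u w)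
    (hpareto : ∀ u v : Fin (k+2) → ℝ, u ∈ Set.Icc (0 : Fin (k+2) → ℝ) 1 →
      v ∈ Set.Icc (0 : Fin (k+2) → ℝ) 1 → (∀ i, v i ≤ u i) → R u v)
    (hsymm : ∀ u : Fin (k+2) → ℝ, u ∈ Set.Icc (0 : Fin (k+2) → ℝ) 1 →
      ∀ π : Equiv.Perm (Fin (k+2)), R u (u ∘ π) ∧ R (u ∘ π) u)
    (hcompro : ∀ u v w : Fin (k+2) → ℝ, u ∈ Set.Icc (0 : Fin (k+2) → ℝ) 1 →
      v ∈ Set.Icc (0 : Fin (k+2) → ℝ) 1 → w ∈ Set.Icc (0 : Fin (k+2) → ℝ) 1 →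
      (∀ i, u i ≠ v i) →
      (∀ i, min (u i) (v i) < w i ∧ w i < max (u i) (v i)) →
      R w u ∨ R w v)
    (hconti : ∀ u : Fin (k+2) → ℝ, u ∈ Set.Icc (0 : Fin (k+2) → ℝ) 1 →
      IsClosed {v : Fin (k+2) → ℝ | v ∈ Set.Icc (0 : Fin (k+2) → ℝ) 1 ∧ R v u} ∧
      IsClosed {v : Fin (k+2) → ℝ | v ∈ Set.Icc (0 : Fin (k+2) → ℝ) 1 ∧ R u v}) :
    ∀ (u : Fin (k+2) → ℝ) (m : ℝ), (∀ i, 0 ≤ u i) → (∀ i, u i ≤ 1) →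
      (∀ i, m ≤ u i) → (∃ i0, u i0 = m) → R (fun _ => m) u := by
  have A1 : ∀ (u : Fin (k+2) → ℝ) (m : ℝ), 0 ≤ m → (∀ i, m ≤ u i) →
      (∃ i0, u i0 = m) → (∀ i, u i < 1) → R (fun _ => m) u := by
    intro u m hm0 hmle hmex hu1
    obtain ⟨i0, hi0⟩ := hmex
    have hm1 : m < 1 := hi0 ▸ hu1 i0
    have cu : u ∈ Set.Icc (0 : Fin (k+2) → ℝ) 1 :=
      mem_cube (fun i => le_trans hm0 (hmle i)) (fun i => (hu1 i).le)
    have key : ∀ ε : ℝ, 0 < ε → ε ≤ 1 - m → R (fun _ => m + ε) u := by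
      intro ε hε hε1
      obtain ⟨w, hwu, hwm, hw1, hwlt⟩ :=
        main hcomplete htrans hpareto hsymm hcompro (k+2) u m ε hm0 hε hmle hu1
          ⟨i0, by rw [hi0]; linarith⟩
          (le_trans (Finset.card_filter_le _ _) (by simp))
      have cw : w ∈ Set.Icc (0 : Fin (k+2) → ℝ) 1 :=
        mem_cube (fun i => le_trans hm0 (hwm i)) (fun i => (hw1 i).le)
      have cc : (fun _ : Fin (k+2) => m + ε) ∈ Set.Icc (0 : Fin (k+2) → ℝ) 1 :=
        mem_cube (fun _ => by linarith) (fun _ => by linarith)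
      exact htrans _ w u cc cw cu (hpareto _ w cc cw (fun i => (hwlt i).le)) hwu
    have hclosed := (hconti u cu).1
    have hmem : ∀ p : ℕ, (fun _ : Fin (k+2) => m + (1-m)/((p:ℝ)+1)) ∈
        {v : Fin (k+2) → ℝ | v ∈ Set.Icc (0 : Fin (k+2) → ℝ) 1 ∧ R v u} := by
      intro p
      have hp : (0:ℝ) < (p:ℝ)+1 := by positivity
      have hε : 0 < (1-m)/((p:ℝ)+1) := by
        apply div_pos <;> linarith
      have hε1 : (1-m)/((p:ℝ)+1) ≤ 1-m := by
        rw [div_le_iff₀ hp]; nlinarith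
      exact ⟨mem_cube (fun _ => by linarith) (fun _ => by linarith), key _ hε hε1⟩
    have htend : Filter.Tendsto (fun p : ℕ => (fun _ : Fin (k+2) => m + (1-m)/((p:ℝ)+1)))
        Filter.atTop (nhds (fun _ => m)) := by
      rw [tendsto_pi_nhds]
      intro i
      have h0 : Filter.Tendsto (fun p : ℕ => (1:ℝ)/((p:ℝ)+1)) Filter.atTop (nhds 0) :=
        tendsto_one_div_add_atTop_nhds_zero_nat
      have h1 := (h0.const_mul (1-m)).const_add m
      simp only [mul_zero, add_zero] at h1
      convert h1 using 2 with p
      rw [mul_one_div]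
    have := hclosed.mem_of_tendsto htend (Filter.Eventually.of_forall hmem)
    exact this.2
  intro u m hu0 hu1 hmle hmex
  obtain ⟨i0, hi0⟩ := hmex
  have hm0 : 0 ≤ m := hi0 ▸ hu0 i0
  have hm1 : m ≤ 1 := hi0 ▸ hu1 i0
  have cu : u ∈ Set.Icc (0 : Fin (k+2) → ℝ) 1 := mem_cube hu0 hu1
  have cm : (fun _ : Fin (k+2) => m) ∈ Set.Icc (0 : Fin (k+2) → ℝ) 1 :=
    mem_cube (fun _ => hm0) (fun _ => hm1)
  set c : ℕ → ℝ := fun p => 1 - 1/((p:ℝ)+1) with hcdef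
  have hc01 : ∀ p : ℕ, 0 ≤ c p ∧ c p < 1 := by
    intro p
    have hp : (0:ℝ) < (p:ℝ)+1 := by positivity
    have h1' : 1/((p:ℝ)+1) ≤ 1 := by rw [div_le_one hp]; linarith
    have h2' : 0 < 1/((p:ℝ)+1) := by positivity
    exact ⟨by rw [hcdef]; simp only; linarith, by rw [hcdef]; simp only; linarith⟩
  have hRp : ∀ p : ℕ, R (fun _ => m) (fun i => c p * u i) := by
    intro p
    obtain ⟨hcp0, hcp1⟩ := hc01 p
    have hv0 : ∀ i, 0 ≤ c p * u i := fun i => mul_nonneg hcp0 (hu0 i)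
    have hv1 : ∀ i, c p * u i < 1 := fun i =>
      lt_of_le_of_lt (by nlinarith [hu0 i, hu1 i]) hcp1
    have h1' : R (fun _ => c p * m) (fun i => c p * u i) :=
      A1 _ _ (mul_nonneg hcp0 hm0) (fun i => mul_le_mul_of_nonneg_left (hmle i) hcp0)
        ⟨i0, by rw [hi0]⟩ hv1
    have cc1 : (fun _ : Fin (k+2) => c p * m) ∈ Set.Icc (0 : Fin (k+2) → ℝ) 1 :=
      mem_cube (fun _ => mul_nonneg hcp0 hm0) (fun _ => by nlinarith)
    have cv : (fun i => c p * u i) ∈ Set.Icc (0 : Fin (k+2) → ℝ) 1 :=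
      mem_cube hv0 (fun i => (hv1 i).le)
    have h2' : R (fun _ => m) (fun _ => c p * m) :=
      hpareto _ _ cm cc1 (fun _ => by nlinarith)
    exact htrans _ _ _ cm cc1 cv h2' h1'
  have hclosed := (hconti (fun _ => m) cm).2
  have htend : Filter.Tendsto (fun p : ℕ => (fun i => c p * u i)) Filter.atTop (nhds u) := by
    rw [tendsto_pi_nhds]
    intro i
    have h0 : Filter.Tendsto (fun p : ℕ => (1:ℝ)/((p:ℝ)+1)) Filter.atTop (nhds 0) :=
      tendsto_one_div_add_atTop_nhds_zero_nat
    have h1 : Filter.Tendsto c Filter.atTop (nhds 1) := by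
      have := h0.const_sub 1
      simpa [hcdef] using this
    have := h1.mul_const (u i)
    simpa only [one_mul] using this
  have hmem : ∀ p : ℕ, (fun i => c p * u i) ∈
      {v : Fin (k+2) → ℝ | v ∈ Set.Icc (0 : Fin (k+2) → ℝ) 1 ∧ R (fun _ => m) v} := by
    intro p
    obtain ⟨hcp0, hcp1⟩ := hc01 p
    exact ⟨mem_cube (fun i => mul_nonneg hcp0 (hu0 i))
      (fun i => by nlinarith [hu0 i, hu1 i]), hRp p⟩
  have := hclosed.mem_of_tendsto htend (Filter.Eventually.of_forall hmem)
  exact this.2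


end Stmt11Aux

open Stmt11Aux in
/-- Analytic core of the paper's Theorem 3 (relative maximin): a complete,
transitive, monotone, strictly monotone, symmetric, compromising and continuous
relation on the unit cube coincides with comparison of minimum coordinates. -/
theorem stmt_11 {n : ℕ} (hn : 2 ≤ n)
    (R : (Fin n → ℝ) → (Fin n → ℝ) → Prop)
    (hcomplete : ∀ u v : Fin n → ℝ, u ∈ Set.Icc (0 : Fin n → ℝ) 1 →
      v ∈ Set.Icc (0 : Fin n → ℝ) 1 → R u v ∨ R v u)
    (htrans : ∀ u v w : Fin n → ℝ, u ∈ Set.Icc (0 : Fin n → ℝ) 1 →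
      v ∈ Set.Icc (0 : Fin n → ℝ) 1 → w ∈ Set.Icc (0 : Fin n → ℝ) 1 →
      R u v → R v w → R u w)
    (hpareto : ∀ u v : Fin n → ℝ, u ∈ Set.Icc (0 : Fin n → ℝ) 1 →
      v ∈ Set.Icc (0 : Fin n → ℝ) 1 → (∀ i, v i ≤ u i) → R u v)
    (hstrict : ∀ u v : Fin n → ℝ, u ∈ Set.Icc (0 : Fin n → ℝ) 1 →
      v ∈ Set.Icc (0 : Fin n → ℝ) 1 → (∀ i, v i < u i) → R u v ∧ ¬ R v u)
    (hsymm : ∀ u : Fin n → ℝ, u ∈ Set.Icc (0 : Fin n → ℝ) 1 →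
      ∀ π : Equiv.Perm (Fin n), R u (u ∘ π) ∧ R (u ∘ π) u)
    (hcompro : ∀ u v w : Fin n → ℝ, u ∈ Set.Icc (0 : Fin n → ℝ) 1 →
      v ∈ Set.Icc (0 : Fin n → ℝ) 1 → w ∈ Set.Icc (0 : Fin n → ℝ) 1 →
      (∀ i, u i ≠ v i) →
      (∀ i, min (u i) (v i) < w i ∧ w i < max (u i) (v i)) →
      R w u ∨ R w v)
    (hconti : ∀ u : Fin n → ℝ, u ∈ Set.Icc (0 : Fin n → ℝ) 1 →
      IsClosed {v : Fin n → ℝ | v ∈ Set.Icc (0 : Fin n → ℝ) 1 ∧ R v u} ∧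
      IsClosed {v : Fin n → ℝ | v ∈ Set.Icc (0 : Fin n → ℝ) 1 ∧ R u v}) :
    ∀ u v : Fin n → ℝ, u ∈ Set.Icc (0 : Fin n → ℝ) 1 →
      v ∈ Set.Icc (0 : Fin n → ℝ) 1 →
      (R u v ↔ (⨅ i, v i) ≤ (⨅ i, u i)) := by
  obtain ⟨k, rfl⟩ : ∃ k, n = k + 2 := ⟨n - 2, by omega⟩
  intro u v cu cv
  have ifact : ∀ f : Fin (k+2) → ℝ, (∀ i, (⨅ j, f j) ≤ f i) ∧ ∃ i0, f i0 = ⨅ j, f j := by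
    intro f
    obtain ⟨i0, hi0⟩ := Finite.exists_min f
    have heq : (⨅ j, f j) = f i0 :=
      le_antisymm (ciInf_le (Set.Finite.bddBelow (Set.finite_range f)) i0) (le_ciInf hi0)
    exact ⟨fun i => heq ▸ hi0 i, ⟨i0, heq.symm⟩⟩
  have hu0 : ∀ i, 0 ≤ u i := fun i => cu.1 i
  have hu1 : ∀ i, u i ≤ 1 := fun i => cu.2 i
  have hv0 : ∀ i, 0 ≤ v i := fun i => cv.1 i
  have hv1 : ∀ i, v i ≤ 1 := fun i => cv.2 i
  obtain ⟨hmule, imu, himu⟩ := ifact u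
  obtain ⟨hmvle, imv, himv⟩ := ifact v
  have hmu0 : 0 ≤ ⨅ i, u i := himu ▸ hu0 imu
  have hmu1 : (⨅ i, u i) ≤ 1 := himu ▸ hu1 imu
  have hmv0 : 0 ≤ ⨅ i, v i := himv ▸ hv0 imv
  have hmv1 : (⨅ i, v i) ≤ 1 := himv ▸ hv1 imv
  have cmu : (fun _ : Fin (k+2) => ⨅ i, u i) ∈ Set.Icc (0 : Fin (k+2) → ℝ) 1 :=
    mem_cube (fun _ => hmu0) (fun _ => hmu1)
  have cmv : (fun _ : Fin (k+2) => ⨅ i, v i) ∈ Set.Icc (0 : Fin (k+2) → ℝ) 1 :=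
    mem_cube (fun _ => hmv0) (fun _ => hmv1)
  have hAu : R (fun _ => ⨅ i, u i) u :=
    constA hcomplete htrans hpareto hsymm hcompro hconti u _ hu0 hu1 hmule ⟨imu, himu⟩
  have hAv : R (fun _ => ⨅ i, v i) v :=
    constA hcomplete htrans hpareto hsymm hcompro hconti v _ hv0 hv1 hmvle ⟨imv, himv⟩
  constructor
  · intro hR
    by_contra h
    push_neg at h
    have h1 : R (fun _ => ⨅ i, u i) v := htrans _ u v cmu cu cv hAu hR
    have h2 : R v (fun _ => ⨅ i, v i) := hpareto v _ cv cmv (fun i => hmvle i)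
    have h3 : R (fun _ => ⨅ i, u i) (fun _ => ⨅ i, v i) := htrans _ v _ cmu cv cmv h1 h2
    exact (hstrict (fun _ => ⨅ i, v i) (fun _ => ⨅ i, u i) cmv cmu (fun _ => h)).2 h3
  · intro hle
    have h1 : R u (fun _ => ⨅ i, u i) := hpareto u _ cu cmu (fun i => hmule i)
    have h2 : R (fun _ => ⨅ i, u i) (fun _ => ⨅ i, v i) := hpareto _ _ cmu cmv (fun _ => hle)
    have h3 : R u (fun _ => ⨅ i, v i) := htrans u _ _ cu cmu cmv h1 h2
    exact htrans u (fun _ => ⨅ i, v i) v cu cmv cv h3 hAv
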